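/- Let Ω ⊆ ℝ³ be open and let P : Ω → ℝ be three times continuously differentiable and harmonic (ΔP = 0 on Ω). Then the vector field σ(x) = x × ∇P(x) satisfies ∇×σ = −∇(P + ⟨x, ∇P⟩) on Ω, and consequently ∇×(∇×σ) = 0, i.e. σ satisfies the flat momentum constraint. -/

import Mathlib

open scoped Topology

/-- Partial derivative `∂ᵢ f` of a scalar function on `ℝⁿ` (as `Fin n → ℝ`). -/
noncomputable def pd {n : ℕ} (i : Fin n) (f : (Fin n → ℝ) → ℝ) (x : Fin n → ℝ) : ℝ :=
  fderiv ℝ f x (Pi.single i 1)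

/-- The gradient of a scalar function on `ℝⁿ`. -/
noncomputable def grad {n : ℕ} (f : (Fin n → ℝ) → ℝ) (x : Fin n → ℝ) : Fin n → ℝ :=
  fun i => pd i f x

/-- The curl of a vector field on `ℝ³`: `(∇×σ)_i = ε_{ijk} ∂_j σ_k`. -/
noncomputable def curl (σ : (Fin 3 → ℝ) → Fin 3 → ℝ) (x : Fin 3 → ℝ) : Fin 3 → ℝ :=
  ![pd 1 (fun y => σ y 2) x - pd 2 (fun y => σ y 1) x,
    pd 2 (fun y => σ y 0) x - pd 0 (fun y => σ y 2) x,
    pd 0 (fun y => σ y 1) x - pd 1 (fun y => σ y 0) x]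

section Helpers

variable {n : ℕ}

lemma pd_congr {f g : (Fin n → ℝ) → ℝ} {x : Fin n → ℝ}
    (h : f =ᶠ[𝓝 x] g) (i : Fin n) : pd i f x = pd i g x := by
  simp only [pd, h.fderiv_eq]

lemma pd_const (i : Fin n) (c : ℝ) (x : Fin n → ℝ) : pd i (fun _ => c) x = 0 := by
  simp [pd]

lemma pd_add {f g : (Fin n → ℝ) → ℝ} {x : Fin n → ℝ} (hf : DifferentiableAt ℝ f x)
    (hg : DifferentiableAt ℝ g x) (i : Fin n) :
    pd i (fun y => f y + g y) x = pd i f x + pd i g x := by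
  simp [pd, fderiv_fun_add hf hg]

lemma pd_sub {f g : (Fin n → ℝ) → ℝ} {x : Fin n → ℝ} (hf : DifferentiableAt ℝ f x)
    (hg : DifferentiableAt ℝ g x) (i : Fin n) :
    pd i (fun y => f y - g y) x = pd i f x - pd i g x := by
  simp [pd, fderiv_fun_sub hf hg]

lemma pd_neg {f : (Fin n → ℝ) → ℝ} {x : Fin n → ℝ} (i : Fin n) :
    pd i (fun y => -f y) x = -pd i f x := by
  simp [pd, fderiv_neg]

lemma pd_mul {f g : (Fin n → ℝ) → ℝ} {x : Fin n → ℝ} (hf : DifferentiableAt ℝ f x)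
    (hg : DifferentiableAt ℝ g x) (i : Fin n) :
    pd i (fun y => f y * g y) x = pd i f x * g x + f x * pd i g x := by
  simp [pd, fderiv_fun_mul hf hg]; ring

lemma diffAt_coord (a : Fin n) (x : Fin n → ℝ) :
    DifferentiableAt ℝ (fun y : Fin n → ℝ => y a) x :=
  (ContinuousLinearMap.proj a : (Fin n → ℝ) →L[ℝ] ℝ).differentiableAt

lemma pd_coord (i a : Fin n) (x : Fin n → ℝ) :
    pd i (fun y => y a) x = if a = i then (1 : ℝ) else 0 := by
  have h : (fun y : Fin n → ℝ => y a)
      = (ContinuousLinearMap.proj a : (Fin n → ℝ) →L[ℝ] ℝ) := rfl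
  rw [pd, h, ContinuousLinearMap.fderiv]
  simp [ContinuousLinearMap.proj_apply, Pi.single_apply]

lemma pd_pd_comm {f : (Fin n → ℝ) → ℝ} {x : Fin n → ℝ} (hf : ContDiffAt ℝ 2 f x)
    (i j : Fin n) :
    pd i (fun y => pd j f y) x = pd j (fun y => pd i f y) x := by
  have hd : DifferentiableAt ℝ (fderiv ℝ f) x :=
    (hf.fderiv_right (m := 1) le_rfl).differentiableAt one_ne_zero
  have key : ∀ a b : Fin n, pd a (fun y => pd b f y) x
      = fderiv ℝ (fderiv ℝ f) x (Pi.single a 1) (Pi.single b 1) := by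
    intro a b
    have h : (fun y => pd b f y) = fun y => (fderiv ℝ f y) (Pi.single b 1) := rfl
    rw [pd, h, fderiv_clm_apply hd (differentiableAt_const _)]
    simp
  rw [key, key]
  exact (hf.isSymmSndFDerivAt (by simp [minSmoothness_of_isRCLikeNormedField])) _ _

end Helpers

/-- If `P` is C³ and harmonic on an open set `Ω ⊆ ℝ³`, then `σ(x) = x × ∇P(x)` satisfies
`∇×σ = −∇(P + ⟨x, ∇P⟩)` on `Ω`, hence `∇×(∇×σ) = 0` on `Ω`, i.e. `σ` satisfies the flat
momentum constraint `∑ᵢ ∂ᵢ(∂ᵢσⱼ − ∂ⱼσᵢ) = 0` on `Ω`. -/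
theorem rotational_harmonic_field_satisfies_momentum_constraint
    (Ω : Set (Fin 3 → ℝ)) (hΩ : IsOpen Ω)
    (P : (Fin 3 → ℝ) → ℝ) (hP : ContDiffOn ℝ 3 P Ω)
    (hharm : ∀ x ∈ Ω, ∑ i : Fin 3, pd i (fun y => pd i P y) x = 0)
    (σ : (Fin 3 → ℝ) → Fin 3 → ℝ)
    (hσ : ∀ x, σ x = crossProduct x (grad P x)) :
    (∀ x ∈ Ω, curl σ x = - grad (fun y => P y + ∑ i : Fin 3, y i * pd i P y) x) ∧
    (∀ x ∈ Ω, curl (fun y => curl σ y) x = 0) ∧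
    (∀ (j : Fin 3), ∀ x ∈ Ω,
      ∑ i : Fin 3,
        pd i (fun y => pd i (fun z => σ z j) y - pd j (fun z => σ z i) y) x = 0) := by
  have hgC : ∀ x ∈ Ω, ∀ j : Fin 3, ContDiffAt ℝ 2 (fun y => pd j P y) x := by
    intro x hx j
    have hPx : ContDiffAt ℝ 3 P x := hP.contDiffAt (hΩ.mem_nhds hx)
    have h2 : ContDiffAt ℝ 2 (fderiv ℝ P) x := hPx.fderiv_right (by norm_num)
    exact h2.clm_apply contDiffAt_const
  have hgd : ∀ x ∈ Ω, ∀ j : Fin 3, DifferentiableAt ℝ (fun y => pd j P y) x :=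
    fun x hx j => (hgC x hx j).differentiableAt (by norm_num)
  have hcomm : ∀ x ∈ Ω, ∀ i j : Fin 3,
      pd i (fun y => pd j P y) x = pd j (fun y => pd i P y) x := by
    intro x hx i j
    exact pd_pd_comm ((hP.contDiffAt (hΩ.mem_nhds hx)).of_le (by norm_num)) i j
  have hharm3 : ∀ x ∈ Ω, pd 0 (fun y => pd 0 P y) x + pd 1 (fun y => pd 1 P y) x
      + pd 2 (fun y => pd 2 P y) x = 0 := by
    intro x hx
    have := hharm x hx
    rwa [Fin.sum_univ_three] at this
  have hσ0 : (fun y => σ y 0) = fun y => y 1 * pd 2 P y - y 2 * pd 1 P y := by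
    funext y; simp [hσ y, cross_apply, grad]
  have hσ1 : (fun y => σ y 1) = fun y => y 2 * pd 0 P y - y 0 * pd 2 P y := by
    funext y; simp [hσ y, cross_apply, grad]
  have hσ2 : (fun y => σ y 2) = fun y => y 0 * pd 1 P y - y 1 * pd 0 P y := by
    funext y; simp [hσ y, cross_apply, grad]
  have key : ∀ x ∈ Ω, ∀ i a b c d : Fin 3,
      pd i (fun y => y a * pd b P y - y c * pd d P y) x
      = ((if a = i then (1:ℝ) else 0) * pd b P x + x a * pd i (fun y => pd b P y) x)
        - ((if c = i then (1:ℝ) else 0) * pd d P x + x c * pd i (fun y => pd d P y) x) := by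
    intro x hx i a b c d
    rw [pd_sub ((diffAt_coord a x).fun_mul (hgd x hx b)) ((diffAt_coord c x).fun_mul (hgd x hx d)),
        pd_mul (diffAt_coord a x) (hgd x hx b), pd_mul (diffAt_coord c x) (hgd x hx d)]
    simp only [pd_coord]
  have hQeq : (fun y : Fin 3 → ℝ => P y + ∑ i : Fin 3, y i * pd i P y)
      = fun y => P y + (y 0 * pd 0 P y + y 1 * pd 1 P y + y 2 * pd 2 P y) := by
    funext y; rw [Fin.sum_univ_three]
  have pdQ : ∀ x ∈ Ω, ∀ k : Fin 3,
      pd k (fun y => P y + ∑ i : Fin 3, y i * pd i P y) x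
      = pd k P x
        + (((if (0:Fin 3) = k then (1:ℝ) else 0) * pd 0 P x
              + x 0 * pd k (fun y => pd 0 P y) x)
          + ((if (1:Fin 3) = k then (1:ℝ) else 0) * pd 1 P x
              + x 1 * pd k (fun y => pd 1 P y) x)
          + ((if (2:Fin 3) = k then (1:ℝ) else 0) * pd 2 P x
              + x 2 * pd k (fun y => pd 2 P y) x)) := by
    intro x hx k
    have hPd : DifferentiableAt ℝ P x :=
      (hP.contDiffAt (hΩ.mem_nhds hx)).differentiableAt (by norm_num)
    have d0 : DifferentiableAt ℝ (fun y : Fin 3 → ℝ => y 0 * pd 0 P y) x :=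
      (diffAt_coord 0 x).mul (hgd x hx 0)
    have d1 : DifferentiableAt ℝ (fun y : Fin 3 → ℝ => y 1 * pd 1 P y) x :=
      (diffAt_coord 1 x).mul (hgd x hx 1)
    have d2 : DifferentiableAt ℝ (fun y : Fin 3 → ℝ => y 2 * pd 2 P y) x :=
      (diffAt_coord 2 x).mul (hgd x hx 2)
    rw [hQeq, pd_add hPd ((d0.fun_add d1).fun_add d2), pd_add (d0.fun_add d1) d2, pd_add d0 d1,
        pd_mul (diffAt_coord 0 x) (hgd x hx 0), pd_mul (diffAt_coord 1 x) (hgd x hx 1),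
        pd_mul (diffAt_coord 2 x) (hgd x hx 2)]
    simp only [pd_coord]
  have part1 : ∀ x ∈ Ω,
      curl σ x = - grad (fun y => P y + ∑ i : Fin 3, y i * pd i P y) x := by
    intro x hx
    have h0 := hharm3 x hx
    have c01 := hcomm x hx 0 1
    have c02 := hcomm x hx 0 2
    have c12 := hcomm x hx 1 2
    have H0 : pd 1 (fun y => σ y 2) x - pd 2 (fun y => σ y 1) x
        = - pd 0 (fun y => P y + ∑ i : Fin 3, y i * pd i P y) x := by
      rw [hσ2, hσ1, key x hx 1 0 1 1 0, key x hx 2 2 0 0 2, pdQ x hx 0]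
      simp only [Fin.reduceEq, reduceIte, Fin.isValue, one_mul, zero_mul]
      linear_combination x 0 * h0 + x 1 * c01 + x 2 * c02
    have H1 : pd 2 (fun y => σ y 0) x - pd 0 (fun y => σ y 2) x
        = - pd 1 (fun y => P y + ∑ i : Fin 3, y i * pd i P y) x := by
      rw [hσ0, hσ2, key x hx 2 1 2 2 1, key x hx 0 0 1 1 0, pdQ x hx 1]
      simp only [Fin.reduceEq, reduceIte, Fin.isValue, one_mul, zero_mul]
      linear_combination x 1 * h0 - x 0 * c01 + x 2 * c12
    have H2 : pd 0 (fun y => σ y 1) x - pd 1 (fun y => σ y 0) x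
        = - pd 2 (fun y => P y + ∑ i : Fin 3, y i * pd i P y) x := by
      rw [hσ1, hσ0, key x hx 0 2 0 0 2, key x hx 1 1 2 2 1, pdQ x hx 2]
      simp only [Fin.reduceEq, reduceIte, Fin.isValue, one_mul, zero_mul]
      linear_combination x 2 * h0 - x 0 * c02 - x 1 * c12
    funext k
    fin_cases k
    · exact H0
    · exact H1
    · exact H2
  have part2 : ∀ x ∈ Ω, curl (fun y => curl σ y) x = 0 := by
    intro x hx
    have hPx : ContDiffAt ℝ 3 P x := hP.contDiffAt (hΩ.mem_nhds hx)
    have hQ2 : ContDiffAt ℝ 2 (fun y => P y + ∑ i : Fin 3, y i * pd i P y) x := by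
      refine (hPx.of_le (by norm_num)).add ?_
      refine ContDiffAt.sum fun i _ => ?_
      exact ((ContinuousLinearMap.proj i : (Fin 3 → ℝ) →L[ℝ] ℝ).contDiff.contDiffAt).mul
        (hgC x hx i)
    have hev : ∀ k : Fin 3, (fun y => curl σ y k) =ᶠ[𝓝 x]
        (fun y => -(pd k (fun z => P z + ∑ i : Fin 3, z i * pd i P z) y)) := by
      intro k
      filter_upwards [hΩ.mem_nhds hx] with y hy
      rw [part1 y hy]
      simp [grad]
    have H0 : pd 1 (fun y => curl σ y 2) x - pd 2 (fun y => curl σ y 1) x = (0:ℝ) := by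
      rw [pd_congr (hev 2) 1, pd_congr (hev 1) 2, pd_neg, pd_neg, pd_pd_comm hQ2 1 2]
      ring
    have H1 : pd 2 (fun y => curl σ y 0) x - pd 0 (fun y => curl σ y 2) x = (0:ℝ) := by
      rw [pd_congr (hev 0) 2, pd_congr (hev 2) 0, pd_neg, pd_neg, pd_pd_comm hQ2 2 0]
      ring
    have H2 : pd 0 (fun y => curl σ y 1) x - pd 1 (fun y => curl σ y 0) x = (0:ℝ) := by
      rw [pd_congr (hev 1) 0, pd_congr (hev 0) 1, pd_neg, pd_neg, pd_pd_comm hQ2 0 1]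
      ring
    funext k
    fin_cases k
    · exact H0
    · exact H1
    · exact H2
  refine ⟨part1, part2, ?_⟩
  intro j x hx
  have h2 := part2 x hx
  have h2c : ∀ k : Fin 3, curl (fun y => curl σ y) x k = 0 := fun k => by rw [h2]; rfl
  have e0 : pd 1 (fun y => curl σ y 2) x - pd 2 (fun y => curl σ y 1) x = 0 := by
    simpa [curl] using h2c 0
  have e1 : pd 2 (fun y => curl σ y 0) x - pd 0 (fun y => curl σ y 2) x = 0 := by
    simpa [curl] using h2c 1
  have e2 : pd 0 (fun y => curl σ y 1) x - pd 1 (fun y => curl σ y 0) x = 0 := by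
    simpa [curl] using h2c 2
  have S0 : pd 0 (fun y => pd 0 (fun z => σ z 0) y - pd 0 (fun z => σ z 0) y) x
      + pd 1 (fun y => pd 1 (fun z => σ z 0) y - pd 0 (fun z => σ z 1) y) x
      + pd 2 (fun y => pd 2 (fun z => σ z 0) y - pd 0 (fun z => σ z 2) y) x = 0 := by
    have t0 : (fun y => pd 0 (fun z => σ z 0) y - pd 0 (fun z => σ z 0) y)
        = fun _ : Fin 3 → ℝ => (0:ℝ) := by funext y; ring
    have t1 : (fun y => pd 1 (fun z => σ z 0) y - pd 0 (fun z => σ z 1) y)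
        = fun y => -(curl σ y 2) := by funext y; simp [curl]; try ring
    have t2 : (fun y => pd 2 (fun z => σ z 0) y - pd 0 (fun z => σ z 2) y)
        = fun y => curl σ y 1 := by funext y; simp [curl]
    rw [t0, t1, t2, pd_const, pd_neg]
    linarith [e0]
  have S1 : pd 0 (fun y => pd 0 (fun z => σ z 1) y - pd 1 (fun z => σ z 0) y) x
      + pd 1 (fun y => pd 1 (fun z => σ z 1) y - pd 1 (fun z => σ z 1) y) x
      + pd 2 (fun y => pd 2 (fun z => σ z 1) y - pd 1 (fun z => σ z 2) y) x = 0 := by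
    have t0 : (fun y => pd 0 (fun z => σ z 1) y - pd 1 (fun z => σ z 0) y)
        = fun y => curl σ y 2 := by funext y; simp [curl]
    have t1 : (fun y => pd 1 (fun z => σ z 1) y - pd 1 (fun z => σ z 1) y)
        = fun _ : Fin 3 → ℝ => (0:ℝ) := by funext y; ring
    have t2 : (fun y => pd 2 (fun z => σ z 1) y - pd 1 (fun z => σ z 2) y)
        = fun y => -(curl σ y 0) := by funext y; simp [curl]; try ring
    rw [t0, t1, t2, pd_const, pd_neg]
    linarith [e1]
  have S2 : pd 0 (fun y => pd 0 (fun z => σ z 2) y - pd 2 (fun z => σ z 0) y) x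
      + pd 1 (fun y => pd 1 (fun z => σ z 2) y - pd 2 (fun z => σ z 1) y) x
      + pd 2 (fun y => pd 2 (fun z => σ z 2) y - pd 2 (fun z => σ z 2) y) x = 0 := by
    have t0 : (fun y => pd 0 (fun z => σ z 2) y - pd 2 (fun z => σ z 0) y)
        = fun y => -(curl σ y 1) := by funext y; simp [curl]; try ring
    have t1 : (fun y => pd 1 (fun z => σ z 2) y - pd 2 (fun z => σ z 1) y)
        = fun y => curl σ y 0 := by funext y; simp [curl]
    have t2 : (fun y => pd 2 (fun z => σ z 2) y - pd 2 (fun z => σ z 2) y)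
        = fun _ : Fin 3 → ℝ => (0:ℝ) := by funext y; ring
    rw [t0, t1, t2, pd_const, pd_neg]
    linarith [e2]
  rw [Fin.sum_univ_three]
  fin_cases j
  · exact S0
  · exact S1
  · exact S2
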